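/- Let q be an even integer with q ≥ 6 and suppose G is a C₄-free simple graph on q²+q vertices with exactly e = (1/2)·q·(q+1)² − q + 1 edges and maximum degree at most q+2. Then the number of paths of length 2 in G, namely ∑_{v} C(d(v), 2) where the sum is over all vertices v and C(·,2) denotes the binomial coefficient, satisfies 2·∑_{v} C(d(v), 2) ≤ 2·q·e − 2·|X_{q+1}| + |X_{q+2}|, where X_k denotes the set of vertices of degree k. -/

import Mathlib

/-- A simple graph is `C₄`-free iff no two distinct vertices have two or more
common neighbors. -/
def C4Free {V : Type*} (G : SimpleGraph V) : Prop :=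
  ∀ u v : V, u ≠ v → {w : V | G.Adj u w ∧ G.Adj v w}.Subsingleton

/-- `degCount G k` is the number of vertices of `G` of degree exactly `k`,
i.e. `|X_k|`. -/
def degCount {n : ℕ} (G : SimpleGraph (Fin n)) [DecidableRel G.Adj] (k : ℕ) : ℕ :=
  (Finset.univ.filter fun v => G.degree v = k).card

open Finset SimpleGraph

private lemma two_mul_choose_two (k : ℕ) : 2 * k.choose 2 = k * (k - 1) := by
  rcases k with _ | m
  · simp
  · rw [Nat.choose_two_right]
    simp only [Nat.add_sub_cancel]
    have h : 2 ∣ (m + 1) * m := by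
      rcases Nat.even_mul_succ_self m with ⟨r, hr⟩
      exact ⟨r, by rw [mul_comm]; omega⟩
    rw [Nat.mul_div_cancel' h]

private lemma even_card_of_pairing {α : Type*} [DecidableEq α] :
    ∀ s : Finset α, ∀ μ : α → α,
      (∀ x ∈ s, μ x ∈ s ∧ μ x ≠ x ∧ μ (μ x) = x) → Even s.card := by
  intro s
  induction s using Finset.strongInduction with
  | _ s ih =>
    intro μ h
    rcases s.eq_empty_or_nonempty with rfl | ⟨x, hx⟩
    · simp
    · obtain ⟨hμx, hne, hinv⟩ := h x hx
      have hμmem : μ x ∈ s.erase x := Finset.mem_erase.mpr ⟨hne, hμx⟩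
      set t := (s.erase x).erase (μ x) with ht
      have hts : t ⊂ s :=
        Finset.ssubset_of_subset_of_ssubset (Finset.erase_subset _ _)
          (Finset.erase_ssubset hx)
      have hmem : ∀ y, y ∈ t ↔ y ∈ s ∧ y ≠ x ∧ y ≠ μ x := by
        intro y
        simp only [ht, Finset.mem_erase]
        tauto
      have hcard : s.card = t.card + 2 := by
        have h1 : (s.erase x).card = s.card - 1 := Finset.card_erase_of_mem hx
        have h2 : t.card = (s.erase x).card - 1 := Finset.card_erase_of_mem hμmem
        have h3 : 0 < (s.erase x).card := Finset.card_pos.mpr ⟨μ x, hμmem⟩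
        have h4 : 0 < s.card := Finset.card_pos.mpr ⟨x, hx⟩
        omega
      have hev : Even t.card := by
        refine ih t hts μ ?_
        intro y hy
        obtain ⟨hys, hyx, hyμx⟩ := (hmem y).mp hy
        obtain ⟨h1, h2, h3⟩ := h y hys
        refine ⟨(hmem (μ y)).mpr ⟨h1, ?_, ?_⟩, h2, h3⟩
        · intro hcon
          exact hyμx (by rw [← h3, hcon])
        · intro hcon
          exact hyx (by rw [← h3, hcon, hinv])
      rw [hcard]
      exact hev.add (by decide)

variable {V : Type*} [Fintype V] [DecidableEq V]

/-- in a `C₄`-free graph, two distinct neighbors `x y` of `u` have disjoint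
  neighborhoods away from `u`. -/
private lemma nbhd_disj (G : SimpleGraph V) [DecidableRel G.Adj] (hG : C4Free G) (u : V)
    {x y : V} (hx : G.Adj u x) (hy : G.Adj u y) (hxy : x ≠ y) :
    Disjoint ((G.neighborFinset x).erase u) ((G.neighborFinset y).erase u) := by
  refine Finset.disjoint_left.mpr ?_
  intro w hw hw'
  rw [Finset.mem_erase, mem_neighborFinset] at hw hw'
  exact hxy (hG u w (Ne.symm hw.1) ⟨hx, hw.2.symm⟩ ⟨hy, hw'.2.symm⟩)

private lemma sum_nbhd_le (G : SimpleGraph V) [DecidableRel G.Adj] (hG : C4Free G) (u : V) :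
    ∑ x ∈ G.neighborFinset u, (G.degree x - 1) ≤ Fintype.card V - 1 := by
  have hcard : ∀ x ∈ G.neighborFinset u, ((G.neighborFinset x).erase u).card
      = G.degree x - 1 := by
    intro x hx
    rw [mem_neighborFinset] at hx
    rw [Finset.card_erase_of_mem (by rw [mem_neighborFinset]; exact hx.symm),
      card_neighborFinset_eq_degree]
  rw [← Finset.sum_congr rfl hcard, ← Finset.card_biUnion (by
    intro x hx y hy hxy
    rw [Finset.mem_coe, mem_neighborFinset] at hx hy
    exact nbhd_disj G hG u hx hy hxy)]
  calc ((G.neighborFinset u).biUnion fun x => (G.neighborFinset x).erase u).card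
      ≤ (Finset.univ.erase u).card := by
        apply Finset.card_le_card
        intro w hw
        rw [Finset.mem_biUnion] at hw
        obtain ⟨x, _, hwx⟩ := hw
        exact Finset.mem_erase.mpr ⟨(Finset.mem_erase.mp hwx).1, Finset.mem_univ w⟩
    _ = Fintype.card V - 1 := by rw [Finset.card_erase_of_mem (Finset.mem_univ u),
        Finset.card_univ]

private lemma sum_nbhd_le_of_odd (G : SimpleGraph V) [DecidableRel G.Adj] (hG : C4Free G)
    (u : V) (hodd : Odd (G.degree u)) :
    ∑ x ∈ G.neighborFinset u, (G.degree x - 1) ≤ Fintype.card V - 2 := by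
  classical
  -- an isolated vertex of the neighborhood of u
  have hiso : ∃ x₀ ∈ G.neighborFinset u, ∀ x ∈ G.neighborFinset u, ¬ G.Adj x x₀ := by
    by_contra hcon
    push_neg at hcon
    -- every neighbor of u has a (unique) neighbor inside N(u); pair them up
    have huniq : ∀ x ∈ G.neighborFinset u, ∀ y₁ ∈ G.neighborFinset u,
        ∀ y₂ ∈ G.neighborFinset u, G.Adj y₁ x → G.Adj y₂ x → y₁ = y₂ := by
      intro x hx y₁ hy₁ y₂ hy₂ h1 h2
      rw [mem_neighborFinset] at hx hy₁ hy₂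
      exact hG u x hx.ne ⟨hy₁, h1.symm⟩ ⟨hy₂, h2.symm⟩
    set μ : V → V := fun x =>
      if hx : ∃ y, y ∈ G.neighborFinset u ∧ G.Adj y x then hx.choose else x with hμ
    have hμspec : ∀ x ∈ G.neighborFinset u, μ x ∈ G.neighborFinset u ∧ G.Adj (μ x) x := by
      intro x hx
      obtain ⟨y, hy, hyx⟩ := hcon x hx
      have hex : ∃ y, y ∈ G.neighborFinset u ∧ G.Adj y x := ⟨y, hy, hyx⟩
      simp only [hμ, dif_pos hex]
      exact ⟨hex.choose_spec.1, hex.choose_spec.2⟩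
    have heven : Even (G.neighborFinset u).card := by
      apply even_card_of_pairing (G.neighborFinset u) μ
      intro x hx
      obtain ⟨h1, h2⟩ := hμspec x hx
      refine ⟨h1, fun hc => G.irrefl (hc ▸ h2), ?_⟩
      obtain ⟨h3, h4⟩ := hμspec (μ x) h1
      exact huniq (μ x) h1 (μ (μ x)) h3 x hx h4 h2.symm
    rw [card_neighborFinset_eq_degree] at heven
    exact (Nat.not_even_iff_odd.mpr hodd) heven
  obtain ⟨x₀, hx₀, hx₀iso⟩ := hiso
  have hcard : ∀ x ∈ G.neighborFinset u, ((G.neighborFinset x).erase u).card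
      = G.degree x - 1 := by
    intro x hx
    rw [mem_neighborFinset] at hx
    rw [Finset.card_erase_of_mem (by rw [mem_neighborFinset]; exact hx.symm),
      card_neighborFinset_eq_degree]
  rw [← Finset.sum_congr rfl hcard, ← Finset.card_biUnion (by
    intro x hx y hy hxy
    rw [Finset.mem_coe, mem_neighborFinset] at hx hy
    exact nbhd_disj G hG u hx hy hxy)]
  have hx₀u : x₀ ≠ u := by
    rw [mem_neighborFinset] at hx₀
    exact hx₀.ne'
  calc ((G.neighborFinset u).biUnion fun x => (G.neighborFinset x).erase u).card
      ≤ ((Finset.univ.erase u).erase x₀).card := by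
        apply Finset.card_le_card
        intro w hw
        rw [Finset.mem_biUnion] at hw
        obtain ⟨x, hxmem, hwx⟩ := hw
        rw [Finset.mem_erase, mem_neighborFinset] at hwx
        refine Finset.mem_erase.mpr ⟨?_, Finset.mem_erase.mpr ⟨hwx.1, Finset.mem_univ w⟩⟩
        intro hwx₀
        exact hx₀iso x hxmem (hwx₀ ▸ hwx.2)
    _ = Fintype.card V - 2 := by
        rw [Finset.card_erase_of_mem (Finset.mem_erase.mpr ⟨hx₀u, Finset.mem_univ x₀⟩),
          Finset.card_erase_of_mem (Finset.mem_univ u), Finset.card_univ]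
        omega

/-- double counting: summing `f` over all neighborhoods. -/
private lemma sum_nbr_sum (G : SimpleGraph V) [DecidableRel G.Adj] (f : V → ℕ) :
    ∑ u : V, ∑ x ∈ G.neighborFinset u, f x = ∑ x : V, G.degree x * f x := by
  have h : ∀ u : V, ∑ x ∈ G.neighborFinset u, f x
      = ∑ x : V, if G.Adj u x then f x else 0 := by
    intro u
    rw [neighborFinset_eq_filter, Finset.sum_filter]
  simp_rw [h]
  rw [Finset.sum_comm]
  refine Finset.sum_congr rfl fun x _ => ?_
  rw [← Finset.sum_filter, Finset.sum_const, smul_eq_mul]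
  congr 1
  rw [← card_neighborFinset_eq_degree, neighborFinset_eq_filter]
  congr 1
  ext u
  simp [adj_comm]

theorem two_path_count_bound (q : ℕ) (hq : 6 ≤ q) (hqe : Even q)
    (G : SimpleGraph (Fin (q ^ 2 + q))) [DecidableRel G.Adj] (hG : C4Free G)
    (hΔ : ∀ v, G.degree v ≤ q + 2)
    (he : G.edgeFinset.card = q * (q + 1) ^ 2 / 2 - q + 1) :
    (2 * ∑ v : Fin (q ^ 2 + q), (G.degree v).choose 2 : ℤ) ≤
      2 * q * G.edgeFinset.card - 2 * degCount G (q + 1) + degCount G (q + 2) := by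
  classical
  have hn2 : 2 ≤ q ^ 2 + q := by nlinarith
  have hcardV : Fintype.card (Fin (q ^ 2 + q)) = q ^ 2 + q := Fintype.card_fin _
  set E := G.edgeFinset.card with hE
  set A := Finset.univ.filter (fun v : Fin (q ^ 2 + q) => G.degree v = q + 1) with hA
  set B := Finset.univ.filter (fun v : Fin (q ^ 2 + q) => G.degree v = q + 2) with hB
  set C := Finset.univ.filter (fun v : Fin (q ^ 2 + q) => G.degree v ≤ q) with hC
  have hdegA : degCount G (q + 1) = A.card := rfl
  have hdegB : degCount G (q + 2) = B.card := rfl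
  -- split any sum over univ into A, B, C parts
  have hABu : A ∪ B ∪ C = Finset.univ := by
    ext v
    have := hΔ v
    simp only [hA, hB, hC, Finset.mem_union, Finset.mem_filter, Finset.mem_univ, true_and, iff_true]
    omega
  have hdAB : Disjoint A B := by
    rw [Finset.disjoint_left]
    intro v hv hv'
    simp only [hA, hB, Finset.mem_filter] at hv hv'
    omega
  have hdABC : Disjoint (A ∪ B) C := by
    rw [Finset.disjoint_left]
    intro v hv hv'
    simp only [hA, hB, hC, Finset.mem_union, Finset.mem_filter] at hv hv'
    omega
  have hsplit : ∀ g : Fin (q ^ 2 + q) → ℕ,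
      ∑ u : Fin (q ^ 2 + q), g u = ∑ u ∈ A, g u + ∑ u ∈ B, g u + ∑ u ∈ C, g u := by
    intro g
    rw [← hABu, Finset.sum_union hdABC, Finset.sum_union hdAB]
  -- step 1 : 2 ∑ C(d,2) = ∑_u ∑_{x∈N(u)} (d x - 1)
  have hstep1 : 2 * ∑ v : Fin (q ^ 2 + q), (G.degree v).choose 2
      = ∑ u : Fin (q ^ 2 + q), ∑ x ∈ G.neighborFinset u, (G.degree x - 1) := by
    rw [Finset.mul_sum, sum_nbr_sum]
    exact Finset.sum_congr rfl fun v _ => two_mul_choose_two _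
  -- per-vertex bounds
  have hboundA : ∀ u ∈ A, ∑ x ∈ G.neighborFinset u, (G.degree x - 1) ≤ q ^ 2 + q - 2 := by
    intro u hu
    have hdu : G.degree u = q + 1 := (Finset.mem_filter.mp hu).2
    have hodd : Odd (G.degree u) := hdu ▸ hqe.add_one
    have := sum_nbhd_le_of_odd G hG u hodd
    rwa [hcardV] at this
  have hboundB : ∀ u ∈ B, ∑ x ∈ G.neighborFinset u, (G.degree x - 1) ≤ q ^ 2 + q - 1 := by
    intro u _
    have := sum_nbhd_le G hG u
    rwa [hcardV] at this
  have hboundC : ∀ u : Fin (q ^ 2 + q), ∑ x ∈ G.neighborFinset u, (G.degree x - 1)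
      ≤ q * G.degree u + ∑ x ∈ G.neighborFinset u, (if G.degree x = q + 2 then 1 else 0) := by
    intro u
    calc ∑ x ∈ G.neighborFinset u, (G.degree x - 1)
        ≤ ∑ x ∈ G.neighborFinset u, (q + if G.degree x = q + 2 then 1 else 0) := by
          refine Finset.sum_le_sum fun x _ => ?_
          have := hΔ x
          split <;> omega
      _ = q * G.degree u + ∑ x ∈ G.neighborFinset u, (if G.degree x = q + 2 then 1 else 0) := by
          rw [Finset.sum_add_distrib, Finset.sum_const, smul_eq_mul,
            card_neighborFinset_eq_degree, mul_comm]
  -- total count of (vertex, q+2-degree-neighbor) incidences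
  have hm : ∑ u : Fin (q ^ 2 + q), ∑ x ∈ G.neighborFinset u, (if G.degree x = q + 2 then 1 else 0)
      = (q + 2) * B.card := by
    rw [sum_nbr_sum]
    simp_rw [mul_ite, mul_one, mul_zero]
    rw [← Finset.sum_filter]
    rw [show Finset.univ.filter (fun x : Fin (q ^ 2 + q) => G.degree x = q + 2) = B from rfl]
    rw [Finset.sum_congr rfl (fun x hx => (Finset.mem_filter.mp hx).2),
      Finset.sum_const, smul_eq_mul, mul_comm]
  -- degree sums on A, B
  have hsumA : ∑ u ∈ A, G.degree u = (q + 1) * A.card := by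
    rw [Finset.sum_congr rfl (fun x hx => (Finset.mem_filter.mp hx).2),
      Finset.sum_const, smul_eq_mul, mul_comm]
  have hsumB : ∑ u ∈ B, G.degree u = (q + 2) * B.card := by
    rw [Finset.sum_congr rfl (fun x hx => (Finset.mem_filter.mp hx).2),
      Finset.sum_const, smul_eq_mul, mul_comm]
  have hhs : ∑ v ∈ C, G.degree v + (q + 1) * A.card + (q + 2) * B.card = 2 * E := by
    have := G.sum_degrees_eq_twice_card_edges
    rw [hsplit (fun v => G.degree v), hsumA, hsumB] at this
    omega
  -- assemble the main ℕ inequality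
  have hmain : 2 * ∑ v : Fin (q ^ 2 + q), (G.degree v).choose 2
      ≤ A.card * (q ^ 2 + q - 2) + B.card * (q ^ 2 + q - 1)
        + (q * ∑ v ∈ C, G.degree v + (q + 2) * B.card) := by
    rw [hstep1, hsplit (fun u => ∑ x ∈ G.neighborFinset u, (G.degree x - 1))]
    have h1 : ∑ u ∈ A, ∑ x ∈ G.neighborFinset u, (G.degree x - 1) ≤ A.card * (q ^ 2 + q - 2) :=
      Finset.sum_le_card_nsmul _ _ _ hboundA
    have h2 : ∑ u ∈ B, ∑ x ∈ G.neighborFinset u, (G.degree x - 1) ≤ B.card * (q ^ 2 + q - 1) :=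
      Finset.sum_le_card_nsmul _ _ _ hboundB
    have h3 : ∑ u ∈ C, ∑ x ∈ G.neighborFinset u, (G.degree x - 1)
        ≤ q * ∑ v ∈ C, G.degree v + (q + 2) * B.card := by
      calc ∑ u ∈ C, ∑ x ∈ G.neighborFinset u, (G.degree x - 1)
          ≤ ∑ u ∈ C, (q * G.degree u
              + ∑ x ∈ G.neighborFinset u, (if G.degree x = q + 2 then 1 else 0)) :=
            Finset.sum_le_sum fun u _ => hboundC u
        _ = q * ∑ v ∈ C, G.degree v
              + ∑ u ∈ C, ∑ x ∈ G.neighborFinset u, (if G.degree x = q + 2 then 1 else 0) := by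
            rw [Finset.sum_add_distrib, Finset.mul_sum]
        _ ≤ q * ∑ v ∈ C, G.degree v + (q + 2) * B.card := by
            refine Nat.add_le_add_left ?_ _
            rw [← hm]
            refine Finset.sum_le_sum_of_subset (Finset.subset_univ C)
    omega
  -- now pass to ℤ
  rw [hdegA, hdegB]
  have cast1 : ((q ^ 2 + q - 2 : ℕ) : ℤ) = ((q ^ 2 + q : ℕ) : ℤ) - 2 := by
    rw [Nat.cast_sub hn2]; norm_num
  have cast2 : ((q ^ 2 + q - 1 : ℕ) : ℤ) = ((q ^ 2 + q : ℕ) : ℤ) - 1 := by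
    rw [Nat.cast_sub (by omega)]; norm_num
  have hmainZ : (2 * ∑ v : Fin (q ^ 2 + q), ((G.degree v).choose 2 : ℤ))
      ≤ (A.card : ℤ) * (((q ^ 2 + q : ℕ) : ℤ) - 2) + (B.card : ℤ) * (((q ^ 2 + q : ℕ) : ℤ) - 1)
        + ((q : ℤ) * ∑ v ∈ C, (G.degree v : ℤ) + ((q : ℤ) + 2) * B.card) := by
    have := hmain
    zify at this
    rw [cast1, cast2] at this
    convert this using 2 <;> push_cast <;> ring
  have hhsZ : (∑ v ∈ C, (G.degree v : ℤ)) + ((q : ℤ) + 1) * A.card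
      + ((q : ℤ) + 2) * B.card = 2 * E := by
    have := hhs
    zify at this
    linarith [this]
  have hX : (∑ v ∈ C, (G.degree v : ℤ))
      = 2 * E - ((q : ℤ) + 1) * A.card - ((q : ℤ) + 2) * B.card := by
    linarith [hhsZ]
  calc (2 * ((∑ v : Fin (q ^ 2 + q), (G.degree v).choose 2 : ℕ) : ℤ))
      = 2 * ∑ v : Fin (q ^ 2 + q), ((G.degree v).choose 2 : ℤ) := by push_cast; ring
    _ ≤ (A.card : ℤ) * (((q ^ 2 + q : ℕ) : ℤ) - 2) + (B.card : ℤ) * (((q ^ 2 + q : ℕ) : ℤ) - 1)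
        + ((q : ℤ) * ∑ v ∈ C, (G.degree v : ℤ) + ((q : ℤ) + 2) * B.card) := hmainZ
    _ = 2 * (q : ℤ) * E - 2 * A.card + B.card := by
        rw [hX]; push_cast; ring
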